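/- Suppose a cop-win graph G has rank cardinality vector (1, m, k, 1) for some positive integers m, k (so G has corner rank 4, one vertex of rank 4, and one vertex of rank 1). Then the subgraph of G induced on the set X_3 of vertices of corner rank 3 is connected. -/

import Mathlib

namespace CopsRobbers

variable {V : Type*}

/-- The closed neighborhood of `v` within the vertex set `S` (graphs are reflexive,
so `v` itself belongs to its closed neighborhood). -/
def closedNbhd (G : SimpleGraph V) (S : Set V) (v : V) : Set V :=
  {u | u ∈ S ∧ (u = v ∨ G.Adj u v)}

/-- `v` is a strict corner of the subgraph induced on `S`: some other vertex `w ∈ S`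
strictly corners `v`, i.e. `N[v] ⊊ N[w]` within `S`. -/
def StrictCorner (G : SimpleGraph V) (S : Set V) (v : V) : Prop :=
  v ∈ S ∧ ∃ w ∈ S, w ≠ v ∧ closedNbhd G S v ⊂ closedNbhd G S w

/-- The remaining vertex sets of the corner ranking procedure (0-indexed auxiliary
version): at each step all current strict corners are removed. -/
def stageAux (G : SimpleGraph V) : ℕ → Set V
  | 0 => Set.univ
  | n + 1 => stageAux G n \ {v | StrictCorner G (stageAux G n) v}

/-- `stage G k` is the vertex set of `G^(k)` (for `k ≥ 1`), so `stage G 1 = V(G)`. -/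
def stage (G : SimpleGraph V) (k : ℕ) : Set V := stageAux G (k - 1)

/-- The corner rank of a vertex: the least `k ≥ 1` such that `v` is a strict corner
of `G^(k)`, or `G^(k)` is a clique still containing `v`; and `⊤` (that is, `∞`) if
there is no such `k`. -/
noncomputable def cornerRank (G : SimpleGraph V) (v : V) : ℕ∞ :=
  sInf {k : ℕ∞ | ∃ n : ℕ, k = (n : ℕ∞) ∧ 1 ≤ n ∧
    (StrictCorner G (stage G n) v ∨ (G.IsClique (stage G n) ∧ v ∈ stage G n))}

/-- The corner rank of a graph: the largest corner rank of a vertex. -/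
noncomputable def graphRank (G : SimpleGraph V) : ℕ∞ := ⨆ v, cornerRank G v

/-- A graph is cop-win iff every vertex has finite corner rank. -/
def CopWin (G : SimpleGraph V) : Prop := ∀ v, cornerRank G v ≠ ⊤

/-- `v` dominates the set `S`: `v` is (reflexively) adjacent to every vertex of `S`. -/
def Dominates (G : SimpleGraph V) (v : V) (S : Set V) : Prop :=
  ∀ u ∈ S, u = v ∨ G.Adj v u

/-- A cop-win graph of corner rank `α ≥ 2` is `tp1` if some vertex of corner rank `α`
dominates the vertex set of `G^(α-1)`. -/
def Tp1 (G : SimpleGraph V) : Prop :=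
  ∃ α : ℕ, 2 ≤ α ∧ graphRank G = (α : ℕ∞) ∧
    ∃ v, cornerRank G v = (α : ℕ∞) ∧ Dominates G v (stage G (α - 1))

/-- `G` realizes the vector `(x_α, …, x_1)` (written as the list `[x_α, …, x_1]`):
`G` is cop-win of corner rank `α` and for each `k`, `x_k` is the number of vertices
of corner rank `k`. -/
def Realizes (G : SimpleGraph V) (x : List ℕ) : Prop :=
  CopWin G ∧ graphRank G = (x.length : ℕ∞) ∧
  ∀ i : Fin x.length,
    x.get i = {v | cornerRank G v = ((x.length - (i : ℕ) : ℕ) : ℕ∞)}.ncard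

/-- `G` r-realizes `x` (for `r ∈ {0,1}`): `G` realizes `x` and `G` is tp-r. -/
def RRealizes (G : SimpleGraph V) (r : ℕ) (x : List ℕ) : Prop :=
  Realizes G x ∧ (Tp1 G ↔ r = 1)

/-- A vector is realizable if it is the rank cardinality vector of some finite cop-win graph. -/
def Realizable (x : List ℕ) : Prop :=
  ∃ (W : Type) (_ : Fintype W) (G : SimpleGraph W), Realizes G x

/-- A vector is r-realizable if some finite tp-r cop-win graph realizes it. -/
def RRealizable (r : ℕ) (x : List ℕ) : Prop :=
  ∃ (W : Type) (_ : Fintype W) (G : SimpleGraph W), RRealizes G r x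

open Classical in
/-- The capture time of a cop-win graph: `cr(G) - r(G)`. -/
noncomputable def captureTime (G : SimpleGraph V) : ℕ :=
  (graphRank G).toNat - (if Tp1 G then 1 else 0)


section Aux
variable (G : SimpleGraph V)

def Pk (n : ℕ) (v : V) : Prop :=
  StrictCorner G (stage G n) v ∨ (G.IsClique (stage G n) ∧ v ∈ stage G n)

lemma stageAux_antitone {j n : ℕ} (h : j ≤ n) : stageAux G n ⊆ stageAux G j := by
  induction n with
  | zero =>
    obtain rfl : j = 0 := Nat.le_zero.mp h
    exact fun v hv => hv
  | succ n ih =>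
    rcases Nat.lt_or_ge j (n + 1) with h' | h'
    · exact fun v hv => ih (Nat.lt_succ_iff.mp h') hv.1
    · obtain rfl : j = n + 1 := le_antisymm h h'
      exact fun v hv => hv

lemma stage_succ (n : ℕ) : stage G (n + 1) = stageAux G n := rfl

lemma cornerRank_le_of {n : ℕ} {v : V} (h1 : 1 ≤ n) (h : Pk G n v) :
    cornerRank G v ≤ (n : ℕ∞) := sInf_le ⟨n, rfl, h1, h⟩

lemma one_le_cornerRank (v : V) : 1 ≤ cornerRank G v := by
  apply le_sInf
  rintro k ⟨n, rfl, h1, -⟩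
  exact_mod_cast Nat.one_le_cast.mpr h1

lemma Pk_of_cornerRank_eq {n : ℕ} {v : V} (h : cornerRank G v = (n : ℕ∞)) :
    1 ≤ n ∧ Pk G n v := by
  by_contra hc
  have hge : ∀ k ∈ {k : ℕ∞ | ∃ m : ℕ, k = (m : ℕ∞) ∧ 1 ≤ m ∧ Pk G m v},
      (n : ℕ∞) + 1 ≤ k := by
    rintro k ⟨m, rfl, h1, hp⟩
    have hk : (n : ℕ∞) ≤ (m : ℕ∞) := h ▸ sInf_le ⟨m, rfl, h1, hp⟩
    have hne : (n : ℕ∞) ≠ (m : ℕ∞) := by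
      intro he
      obtain rfl : n = m := by exact_mod_cast he
      exact hc ⟨h1, hp⟩
    exact (ENat.add_one_le_iff (by simp)).mpr (lt_of_le_of_ne hk hne)
  have hs : (n : ℕ∞) + 1 ≤ cornerRank G v := le_sInf hge
  rw [h] at hs
  simp [ENat.add_one_le_iff] at hs

lemma not_Pk_of_lt {n j : ℕ} {v : V} (h : cornerRank G v = (n : ℕ∞)) (h1 : 1 ≤ j)
    (hj : j < n) : ¬ Pk G j v := by
  intro hp
  have hle := cornerRank_le_of G h1 hp
  rw [h] at hle
  have : n ≤ j := by exact_mod_cast hle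
  omega

lemma mem_stageAux_of_le_cornerRank {n : ℕ} {v : V}
    (h : ((n + 1 : ℕ) : ℕ∞) ≤ cornerRank G v) : v ∈ stageAux G n := by
  induction n with
  | zero => exact Set.mem_univ v
  | succ n ih =>
    have hn : ((n + 1 : ℕ) : ℕ∞) ≤ cornerRank G v :=
      le_trans (by exact_mod_cast Nat.le_succ (n + 1)) h
    refine ⟨ih hn, fun hc => ?_⟩
    have h1 : cornerRank G v ≤ ((n + 1 : ℕ) : ℕ∞) :=
      cornerRank_le_of G (by omega) (Or.inl (by rwa [stage_succ]))
    have h2 : ((n + 2 : ℕ) : ℕ∞) ≤ ((n + 1 : ℕ) : ℕ∞) := le_trans h h1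
    have : n + 2 ≤ n + 1 := by exact_mod_cast h2
    omega

lemma clique_of_mem_stageAux {n j : ℕ} {v : V} (h : cornerRank G v = (j : ℕ∞))
    (hjn : j ≤ n) (hv : v ∈ stageAux G n) :
    G.IsClique (stage G j) ∧ v ∈ stage G j := by
  obtain ⟨h1, hp⟩ := Pk_of_cornerRank_eq G h
  rcases hp with hsc | hcl
  · exfalso
    have hnotin : v ∉ stageAux G j := by
      have he : stageAux G j
          = stageAux G (j - 1) \ {w | StrictCorner G (stageAux G (j - 1)) w} := by
        conv_lhs => rw [show j = (j - 1) + 1 by omega]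
        rfl
      rw [he]
      intro hmem
      exact hmem.2 hsc
    exact hnotin (stageAux_antitone G hjn hv)
  · exact hcl

lemma exists_max_cornerer [Finite V] (S : Set V) {v : V}
    (h : StrictCorner G S v) :
    ∃ t ∈ S, closedNbhd G S v ⊂ closedNbhd G S t ∧ ¬ StrictCorner G S t := by
  obtain ⟨hvS, w, hwS, hwv, hsub⟩ := h
  have hC : {t | t ∈ S ∧ closedNbhd G S v ⊂ closedNbhd G S t}.Nonempty := ⟨w, hwS, hsub⟩
  obtain ⟨t, htC, hmax⟩ := Set.Finite.exists_maximalFor (fun t => closedNbhd G S t)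
    _ (Set.toFinite _) hC
  refine ⟨t, htC.1, htC.2, fun hsc => ?_⟩
  obtain ⟨htS, t', ht'S, ht't, hsub'⟩ := hsc
  have ht'C : t' ∈ {t | t ∈ S ∧ closedNbhd G S v ⊂ closedNbhd G S t} :=
    ⟨ht'S, htC.2.trans hsub'⟩
  exact hsub'.ne (le_antisymm hsub'.subset (hmax ht'C hsub'.subset))
end Aux

end CopsRobbers
open CopsRobbers in
/-- if a cop-win graph realizes `(1, m, k, 1)`, then the subgraph induced
on the vertices of corner rank 3 is connected. -/
theorem CopsRobbers.rank3_connected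
    {V : Type} [Fintype V] (G : SimpleGraph V) (m k : ℕ)
    (hm : 1 ≤ m) (hk : 1 ≤ k) (h : CopsRobbers.Realizes G [1, m, k, 1]) :
    (SimpleGraph.induce {v | CopsRobbers.cornerRank G v = 3} G).Connected := by
  classical
  obtain ⟨hcw, hrank, hcard⟩ := h
  have hrank4 : graphRank G = (4 : ℕ∞) := by
    rw [hrank]; norm_num
  have hc4 : {v | cornerRank G v = (4 : ℕ∞)}.ncard = 1 := by
    have := hcard ⟨0, by norm_num⟩
    norm_num at this
    exact this.symm
  have hc3 : {v | cornerRank G v = (3 : ℕ∞)}.ncard = m := by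
    have := hcard ⟨1, by norm_num⟩
    norm_num at this
    exact this.symm
  have hc1 : {v | cornerRank G v = (1 : ℕ∞)}.ncard = 1 := by
    have := hcard ⟨3, by norm_num⟩
    norm_num at this
    exact this.symm
  -- basic rank facts
  have hle4 : ∀ v, cornerRank G v ≤ 4 := by
    intro v
    have h1 : cornerRank G v ≤ graphRank G := le_iSup (cornerRank G) v
    rwa [hrank4] at h1
  have hcases : ∀ v : V, cornerRank G v = 1 ∨ cornerRank G v = 2 ∨
      cornerRank G v = 3 ∨ cornerRank G v = 4 := by
    intro v
    obtain ⟨n, hn⟩ : ∃ n : ℕ, cornerRank G v = (n : ℕ∞) :=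
      Option.ne_none_iff_exists'.mp (hcw v)
    have h1 : 1 ≤ n := by
      have := one_le_cornerRank G v
      rw [hn] at this
      exact_mod_cast this
    have h4 : n ≤ 4 := by
      have := hle4 v
      rw [hn] at this
      exact_mod_cast this
    interval_cases n <;> rw [hn] <;> norm_num
  obtain ⟨u, hu⟩ := Set.ncard_eq_one.mp hc4
  have hu4 : cornerRank G u = 4 := by
    have : u ∈ ({u} : Set V) := rfl
    rw [← hu] at this
    exact this
  have uniq4 : ∀ v, cornerRank G v = 4 → v = u := by
    intro v hv
    have : v ∈ {v | cornerRank G v = (4 : ℕ∞)} := hv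
    rw [hu] at this
    exact this
  obtain ⟨a, ha⟩ := Set.ncard_eq_one.mp hc1
  have ha1 : cornerRank G a = 1 := by
    have : a ∈ ({a} : Set V) := rfl
    rw [← ha] at this
    exact this
  have uniq1 : ∀ v, cornerRank G v = 1 → v = a := by
    intro v hv
    have : v ∈ {v | cornerRank G v = (1 : ℕ∞)} := hv
    rw [ha] at this
    exact this
  have hne_au : a ≠ u := by
    intro he
    rw [he, hu4] at ha1
    norm_num at ha1
  -- no stage below 4 is a clique
  have no_clique : ∀ j : ℕ, 1 ≤ j → j ≤ 3 → ¬ G.IsClique (stage G j) := by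
    intro j h1 h3 hclq
    have humem : u ∈ stage G j := by
      apply mem_stageAux_of_le_cornerRank G
      rw [hu4]
      have : ((j - 1 + 1 : ℕ) : ℕ∞) ≤ ((4 : ℕ) : ℕ∞) := by
        exact_mod_cast (by omega : j - 1 + 1 ≤ 4)
      simpa using this
    have hple : cornerRank G u ≤ (j : ℕ∞) := cornerRank_le_of G h1 (Or.inr ⟨hclq, humem⟩)
    rw [hu4] at hple
    have : (4 : ℕ) ≤ j := by exact_mod_cast hple
    omega
  -- membership in stages
  have hmem_iff : ∀ (j : ℕ), 1 ≤ j → j ≤ 3 → ∀ v : V,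
      (v ∈ stageAux G j ↔ ((j + 1 : ℕ) : ℕ∞) ≤ cornerRank G v) := by
    intro j h1 h3 v
    constructor
    · intro hv
      by_contra hlt
      push_neg at hlt
      obtain ⟨n, hn⟩ : ∃ n : ℕ, cornerRank G v = (n : ℕ∞) :=
        Option.ne_none_iff_exists'.mp (hcw v)
      have hn1 : 1 ≤ n := by
        have := one_le_cornerRank G v
        rw [hn] at this
        exact_mod_cast this
      have hnj : n ≤ j := by
        rw [hn] at hlt
        have : n < j + 1 := by exact_mod_cast hlt
        omega
      have hcl := clique_of_mem_stageAux G hn hnj hv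
      exact no_clique n hn1 (le_trans hnj h3) hcl.1
    · exact fun hle => mem_stageAux_of_le_cornerRank G hle
  have hmem2 : ∀ v : V, v ∈ stageAux G 1 ↔ (2 : ℕ∞) ≤ cornerRank G v := by
    intro v
    have := hmem_iff 1 le_rfl (by omega) v
    norm_num at this
    exact this
  have hmem3 : ∀ v : V, v ∈ stageAux G 2 ↔ (3 : ℕ∞) ≤ cornerRank G v := by
    intro v
    have := hmem_iff 2 (by omega) (by omega) v
    norm_num at this
    exact this
  have hmem4 : ∀ v : V, v ∈ stageAux G 3 ↔ (4 : ℕ∞) ≤ cornerRank G v := by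
    intro v
    have := hmem_iff 3 (by omega) (by omega) v
    norm_num at this
    exact this
  -- numeral order facts
  have hord : ∀ v : V, ((3 : ℕ∞) ≤ cornerRank G v ↔
      (cornerRank G v = 3 ∨ cornerRank G v = 4)) := by
    intro v
    constructor
    · intro h3
      rcases hcases v with h | h | h | h
      · rw [h] at h3; norm_num at h3
      · rw [h] at h3; norm_num at h3
      · exact Or.inl h
      · exact Or.inr h
    · rintro (h | h) <;> rw [h] <;> norm_num
  have hord2 : ∀ v : V, ((2 : ℕ∞) ≤ cornerRank G v ↔
      (cornerRank G v = 2 ∨ cornerRank G v = 3 ∨ cornerRank G v = 4)) := by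
    intro v
    constructor
    · intro h2
      rcases hcases v with h | h | h | h
      · rw [h] at h2; norm_num at h2
      · exact Or.inl h
      · exact Or.inr (Or.inl h)
      · exact Or.inr (Or.inr h)
    · rintro (h | h | h) <;> rw [h] <;> norm_num
  -- strict corner facts
  have hsc_of : ∀ (j : ℕ), 1 ≤ j → j ≤ 3 → ∀ v : V, cornerRank G v = (j : ℕ∞) →
      StrictCorner G (stage G j) v := by
    intro j h1 h3 v hv
    obtain ⟨-, hp⟩ := Pk_of_cornerRank_eq G hv
    rcases hp with hsc | hcl
    · exact hsc
    · exact absurd hcl.1 (no_clique j h1 h3)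
  have hnsc : ∀ (j n : ℕ), 1 ≤ j → ∀ v : V, cornerRank G v = (n : ℕ∞) → j < n →
      ¬ StrictCorner G (stage G j) v :=
    fun j n h1 v hv hj hs => not_Pk_of_lt G hv h1 hj (Or.inl hs)
  have hsc3 : ∀ v : V, cornerRank G v = 3 → StrictCorner G (stage G 3) v := by
    intro v hv
    exact hsc_of 3 (by omega) (by omega) v (by exact_mod_cast hv)
  have hsc2 : ∀ v : V, cornerRank G v = 2 → StrictCorner G (stage G 2) v := by
    intro v hv
    exact hsc_of 2 (by omega) (by omega) v (by exact_mod_cast hv)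
  have hsc1a : StrictCorner G (stage G 1) a :=
    hsc_of 1 (by omega) (by omega) a (by exact_mod_cast ha1)
  have hnsc3 : ¬ StrictCorner G (stage G 3) u :=
    hnsc 3 4 (by omega) u (by exact_mod_cast hu4) (by omega)
  have hnsc2 : ∀ v : V, (3 : ℕ∞) ≤ cornerRank G v → ¬ StrictCorner G (stage G 2) v := by
    intro v hv
    rcases (hord v).mp hv with h | h
    · exact hnsc 2 3 (by omega) v (by exact_mod_cast h) (by omega)
    · exact hnsc 2 4 (by omega) v (by exact_mod_cast h) (by omega)
  have hnsc1 : ∀ v : V, (2 : ℕ∞) ≤ cornerRank G v → ¬ StrictCorner G (stage G 1) v := by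
    intro v hv
    rcases (hord2 v).mp hv with h | h | h
    · exact hnsc 1 2 (by omega) v (by exact_mod_cast h) (by omega)
    · exact hnsc 1 3 (by omega) v (by exact_mod_cast h) (by omega)
    · exact hnsc 1 4 (by omega) v (by exact_mod_cast h) (by omega)
  -- Step A : u maximally corners every rank-3 vertex in stage 3
  have hA : ∀ v : V, cornerRank G v = 3 →
      closedNbhd G (stage G 3) v ⊂ closedNbhd G (stage G 3) u := by
    intro v hv
    obtain ⟨t, htS, hsub, hnc⟩ := exists_max_cornerer G (stage G 3) (hsc3 v hv)
    have ht34 : (3 : ℕ∞) ≤ cornerRank G t := (hmem3 t).mp htS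
    rcases (hord t).mp ht34 with h3 | h4
    · exact absurd (hsc3 t h3) hnc
    · rwa [uniq4 t h4] at hsub
  have hAdj : ∀ v : V, cornerRank G v = 3 → G.Adj v u := by
    intro v hv
    have hvne : v ≠ u := by
      intro he; rw [he, hu4] at hv; norm_num at hv
    have hvmem : v ∈ closedNbhd G (stage G 3) v :=
      ⟨(hmem3 v).mpr (by rw [hv]), Or.inl rfl⟩
    rcases ((hA v hv).subset hvmem).2 with he | hadj
    · exact absurd he hvne
    · exact hadj
  -- Step B : every rank-3 vertex has a rank-2 neighbor not adjacent to u
  have hB : ∀ v : V, cornerRank G v = 3 →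
      ∃ w : V, cornerRank G w = 2 ∧ G.Adj w v ∧ ¬ G.Adj w u ∧ w ≠ u := by
    intro v hv
    have hvne : v ≠ u := by
      intro he; rw [he, hu4] at hv; norm_num at hv
    have hvT2 : v ∈ stage G 2 := (hmem2 v).mpr (by rw [hv]; norm_num)
    have huT2 : u ∈ stage G 2 := (hmem2 u).mpr (by rw [hu4]; norm_num)
    by_contra hw
    push_neg at hw
    have hsubset : closedNbhd G (stage G 2) v ⊆ closedNbhd G (stage G 2) u := by
      rintro x ⟨hxT2, hxcond⟩
      by_cases hxT3 : x ∈ stage G 3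
      · exact ⟨hxT2, ((hA v hv).subset ⟨hxT3, hxcond⟩).2⟩
      · have hx2 : cornerRank G x = 2 := by
          rcases (hord2 x).mp ((hmem2 x).mp hxT2) with h | h | h
          · exact h
          · exact absurd ((hmem3 x).mpr (by rw [h])) hxT3
          · exact absurd ((hmem3 x).mpr (by rw [h]; norm_num)) hxT3
        rcases hxcond with he | hadj
        · rw [he, hv] at hx2; norm_num at hx2
        · by_cases hadjxu : G.Adj x u
          · exact ⟨hxT2, Or.inr hadjxu⟩
          · exact ⟨hxT2, Or.inl (hw x hx2 hadj hadjxu)⟩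
    have hsub : closedNbhd G (stage G 2) v ⊂ closedNbhd G (stage G 2) u := by
      obtain ⟨z, hzU, hzV⟩ := Set.exists_of_ssubset (hA v hv)
      refine (Set.ssubset_iff_of_subset hsubset).mpr
        ⟨z, ⟨stageAux_antitone G (by omega) hzU.1, hzU.2⟩, ?_⟩
      intro hzv2
      exact hzV ⟨hzU.1, hzv2.2⟩
    exact hnsc2 v (by rw [hv]) ⟨hvT2, u, huT2, Ne.symm hvne, hsub⟩
  -- Step C : maximal cornerer of a rank-2 vertex in stage 2
  have hC : ∀ w : V, cornerRank G w = 2 → ∃ t : V,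
      (cornerRank G t = 3 ∨ cornerRank G t = 4) ∧
      closedNbhd G (stage G 2) w ⊂ closedNbhd G (stage G 2) t := by
    intro w hw
    obtain ⟨t, htS, hsub, hnc⟩ := exists_max_cornerer G (stage G 2) (hsc2 w hw)
    rcases (hord2 t).mp ((hmem2 t).mp htS) with h | h | h
    · exact absurd (hsc2 t h) hnc
    · exact ⟨t, Or.inl h, hsub⟩
    · exact ⟨t, Or.inr h, hsub⟩
  -- stage 2 is everything except a
  have hT2a : ∀ x : V, x ∈ stage G 2 ↔ x ≠ a := by
    intro x
    constructor
    · intro hx he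
      have h2 := (hmem2 x).mp hx
      rw [he, ha1] at h2
      norm_num at h2
    · intro hne
      apply (hmem2 x).mpr
      rcases hcases x with h | h | h | h
      · exact absurd (uniq1 x h) hne
      · rw [h]
      · rw [h]; norm_num
      · rw [h]; norm_num
  -- Step D : a is adjacent to every rank-2 vertex
  have hD : ∀ w : V, cornerRank G w = 2 → G.Adj a w := by
    intro w hw
    obtain ⟨t, -, hsub⟩ := hC w hw
    have htw : t ≠ w := by
      intro he
      rw [he] at hsub
      exact hsub.ne rfl
    have hwa : w ≠ a := by
      intro he; rw [he, ha1] at hw; norm_num at hw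
    by_contra hadj
    apply hnsc1 w (by rw [hw])
    refine ⟨Set.mem_univ w, t, Set.mem_univ t, htw, ?_⟩
    have hsubset : closedNbhd G (stage G 1) w ⊆ closedNbhd G (stage G 1) t := by
      rintro x ⟨-, hxcond⟩
      have hxa : x ≠ a := by
        rintro rfl
        rcases hxcond with he | hadj'
        · exact hwa he.symm
        · exact hadj hadj'
      have hx2 : x ∈ stage G 2 := (hT2a x).mpr hxa
      exact ⟨Set.mem_univ x, (hsub.subset ⟨hx2, hxcond⟩).2⟩
    obtain ⟨z, hzT, hzW⟩ := Set.exists_of_ssubset hsub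
    refine (Set.ssubset_iff_of_subset hsubset).mpr ⟨z, ⟨Set.mem_univ z, hzT.2⟩, ?_⟩
    intro hz1
    exact hzW ⟨hzT.1, hz1.2⟩
  -- Step E : a cornerer b of a, adjacent to all rank-2 vertices
  obtain ⟨haU, b, hbU, hba, hsub_ab⟩ := hsc1a
  have hbw : ∀ w : V, cornerRank G w = 2 → (w = b ∨ G.Adj w b) := by
    intro w hw
    have hwa : w ∈ closedNbhd G (stage G 1) a :=
      ⟨Set.mem_univ w, Or.inr (hD w hw).symm⟩
    exact (hsub_ab.subset hwa).2
  -- main connectivity argument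
  rw [SimpleGraph.connected_iff]
  set S : Set V := {v | cornerRank G v = 3} with hS
  have hSne : S.Nonempty := by
    apply Set.nonempty_of_ncard_ne_zero
    rw [hc3]
    omega
  refine ⟨?_, hSne.to_subtype⟩
  intro x y
  by_contra hreach
  set A : Set V := {z | ∃ hz : z ∈ S, (SimpleGraph.induce S G).Reachable x ⟨z, hz⟩}
    with hAdef
  have hclose : ∀ z ∈ A, ∀ z', z' ∈ S → G.Adj z z' → z' ∈ A := by
    rintro z ⟨hzS, hzr⟩ z' hz'S hadj
    refine ⟨hz'S, hzr.trans (SimpleGraph.Adj.reachable ?_)⟩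
    show (SimpleGraph.induce S G).Adj ⟨z, hzS⟩ ⟨z', hz'S⟩
    exact hadj
  have hxA : (x : V) ∈ A := ⟨x.2, SimpleGraph.Reachable.refl x⟩
  have hyA : (y : V) ∉ A := by
    rintro ⟨hyS, hyr⟩
    exact hreach hyr
  -- key construction
  have hkey : ∀ v : V, v ∈ S → ∃ t, cornerRank G t = 3 ∧ (v = t ∨ G.Adj v t) ∧
      ∃ w, cornerRank G w = 2 ∧ ¬ G.Adj w u ∧ w ≠ u ∧ (w = b ∨ G.Adj w b) ∧
        closedNbhd G (stage G 2) w ⊂ closedNbhd G (stage G 2) t := by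
    intro v hvS
    have hv3 : cornerRank G v = 3 := hvS
    obtain ⟨w, hw2, hwv, hwu, hwune⟩ := hB v hv3
    obtain ⟨t, ht34, hsub⟩ := hC w hw2
    have hwmem : w ∈ closedNbhd G (stage G 2) w :=
      ⟨(hmem2 w).mpr (by rw [hw2]), Or.inl rfl⟩
    have hwt := (hsub.subset hwmem).2
    have ht3 : cornerRank G t = 3 := by
      rcases ht34 with h' | h'
      · exact h'
      · exfalso
        have heq : t = u := uniq4 t h'
        rcases hwt with he | hadj
        · rw [heq] at he; exact hwune he
        · rw [heq] at hadj; exact hwu hadj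
    have hvmem : v ∈ closedNbhd G (stage G 2) w :=
      ⟨(hmem2 v).mpr (by rw [hv3]; norm_num), Or.inr hwv.symm⟩
    exact ⟨t, ht3, (hsub.subset hvmem).2, w, hw2, hwu, hwune, hbw w hw2, hsub⟩
  obtain ⟨t, ht3, hvt, w, hw2, hwu, hwune, hwb, hsubw⟩ := hkey x.1 x.2
  obtain ⟨t', ht'3, hvt', w', hw'2, hw'u, hw'une, hw'b, hsubw'⟩ := hkey y.1 y.2
  have htA : t ∈ A := by
    rcases hvt with he | hadj
    · rw [← he]; exact hxA
    · exact hclose _ hxA t ht3 hadj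
  have ht'A : t' ∉ A := by
    intro ht'A
    rcases hvt' with he | hadj
    · rw [← he] at ht'A; exact hyA ht'A
    · exact hyA (hclose t' ht'A y.1 y.2 hadj.symm)
  have hbmem : ∀ w₀ : V, cornerRank G w₀ = 2 → (w₀ = b ∨ G.Adj w₀ b) →
      b ∈ closedNbhd G (stage G 2) w₀ := by
    intro w₀ hw₀ hwb₀
    refine ⟨(hT2a b).mpr hba, ?_⟩
    rcases hwb₀ with he | hadj
    · exact Or.inl he.symm
    · exact Or.inr hadj.symm
  have hbt := (hsubw.subset (hbmem w hw2 hwb)).2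
  have hbt' := (hsubw'.subset (hbmem w' hw'2 hw'b)).2
  rcases hcases b with h | h | h | h
  · exact hba (uniq1 b h)
  · -- rank b = 2
    obtain ⟨s, hs34, hsubb⟩ := hC b h
    have hwmemb : w ∈ closedNbhd G (stage G 2) b := by
      refine ⟨(hmem2 w).mpr (by rw [hw2]), ?_⟩
      rcases hwb with he | hadj
      · exact Or.inl he
      · exact Or.inr hadj
    have hws := (hsubb.subset hwmemb).2
    have hs3 : cornerRank G s = 3 := by
      rcases hs34 with h' | h'
      · exact h'
      · exfalso
        have heq : s = u := uniq4 s h'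
        rcases hws with he | hadj
        · rw [heq] at he; exact hwune he
        · rw [heq] at hadj; exact hwu hadj
    have htmemb : t ∈ closedNbhd G (stage G 2) b := by
      refine ⟨(hmem2 t).mpr (by rw [ht3]; norm_num), ?_⟩
      rcases hbt with he | hadj
      · exact Or.inl he.symm
      · exact Or.inr hadj.symm
    have ht'memb : t' ∈ closedNbhd G (stage G 2) b := by
      refine ⟨(hmem2 t').mpr (by rw [ht'3]; norm_num), ?_⟩
      rcases hbt' with he | hadj
      · exact Or.inl he.symm
      · exact Or.inr hadj.symm
    have hts := (hsubb.subset htmemb).2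
    have ht's := (hsubb.subset ht'memb).2
    have hsA : s ∈ A := by
      rcases hts with he | hadj
      · rw [← he]; exact htA
      · exact hclose t htA s hs3 hadj
    have ht'A2 : t' ∈ A := by
      rcases ht's with he | hadj
      · rw [he]; exact hsA
      · exact hclose s hsA t' ht'3 hadj.symm
    exact ht'A ht'A2
  · -- rank b = 3
    have hbA : b ∈ A := by
      rcases hbt with he | hadj
      · rw [he]; exact htA
      · exact hclose t htA b h hadj.symm
    have ht'A2 : t' ∈ A := by
      rcases hbt' with he | hadj
      · rw [← he]; exact hbA
      · exact hclose b hbA t' ht'3 hadj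
    exact ht'A ht'A2
  · -- rank b = 4
    have heq : b = u := uniq4 b h
    rcases hwb with he | hadj
    · rw [heq] at he; exact hwune he
    · rw [heq] at hadj; exact hwu hadj
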